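/- For the asymmetric continuous-time Ehrenfest process started at 0, the smallest halting state is x* = ⌈λN/(λ+μ)⌉: for all t ≥ 0, (1 + (λ/μ)e^{-t(λ+μ)})^{N-x}(1 - e^{-t(λ+μ)})^{x} ≤ 1 if and only if x ≥ λN/(λ+μ) (for x in {0,…,N}). -/

import Mathlib

set_option maxHeartbeats 1000000


/-- for the asymmetric continuous-time Ehrenfest process started at `0`,
whose distribution satisfies
`P_0(X_t = x)/π(x) = (1 + (λ/μ) e^{-t(λ+μ)})^{N-x} (1 - e^{-t(λ+μ)})^x`,
a state `x ∈ {0,…,N}` is halting (i.e. the above ratio is `≤ 1` for all `t ≥ 0`)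
if and only if `x ≥ λN/(λ+μ)`; hence the smallest halting state is `⌈λN/(λ+μ)⌉`. -/
theorem stmt17 (N : ℕ) (lam mu : ℝ) (hlam : 0 < lam) (hmu : 0 < mu)
    (x : ℕ) (hx : x ≤ N) :
    (∀ t : ℝ, 0 ≤ t →
      (1 + (lam / mu) * Real.exp (-(t * (lam + mu)))) ^ (N - x)
        * (1 - Real.exp (-(t * (lam + mu)))) ^ x ≤ 1)
    ↔ lam * N / (lam + mu) ≤ (x : ℝ) := by
  have hlm : 0 < lam + mu := by linarith
  set a : ℝ := lam / mu with ha_def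
  have ha : 0 < a := div_pos hlam hmu
  have hma : mu * a = lam := by rw [ha_def]; field_simp
  have hncast : ((N - x : ℕ) : ℝ) = (N : ℝ) - x := by
    push_cast [hx]; ring
  set n : ℝ := (N : ℝ) - x with hn_def
  have hn0 : 0 ≤ n := by
    have : (x : ℝ) ≤ N := by exact_mod_cast hx
    linarith
  have hx0 : (0 : ℝ) ≤ x := Nat.cast_nonneg x
  constructor
  · intro h
    by_contra hcon
    push_neg at hcon
    rw [lt_div_iff₀ hlm] at hcon
    -- d := a*n - x > 0
    have hd : 0 < a * n - x := by
      have h1 : mu * (a * n - x) = lam * n - mu * x := by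
        rw [← hma]; ring
      have h2 : 0 < lam * n - mu * x := by rw [hn_def]; nlinarith
      nlinarith
    set d : ℝ := a * n - ↑x with hdd
    set c : ℝ := a * n * ↑x with hcc
    have hc0 : 0 ≤ c := by positivity
    have hD : 0 < (d + c) * (x + 1) := by
      have : (0:ℝ) < d + c := by linarith
      positivity
    set s : ℝ := d / ((d + c) * (x + 1)) with hs_def
    have hs0 : 0 < s := div_pos hd hD
    have hseq : s * ((d + c) * (x + 1)) = d := div_mul_cancel₀ d (ne_of_gt hD)
    have hs1 : s ≤ 1 := by
      rw [hs_def, div_le_one hD]; nlinarith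
    have hxs : ↑x * s < 1 := by nlinarith
    have hcs : c * s < d := by
      have hcse : c * s = c * d / ((d + c) * (x + 1)) := by
        rw [hs_def]; ring
      rw [hcse, div_lt_iff₀ hD]
      nlinarith [mul_pos hd hd, mul_nonneg (mul_nonneg hd.le hc0) hx0,
        mul_nonneg (mul_nonneg hd.le hd.le) hx0]
    -- choose t
    set t : ℝ := -Real.log s / (lam + mu) with ht_def
    have ht : 0 ≤ t := by
      have : Real.log s ≤ 0 := Real.log_nonpos (le_of_lt hs0) hs1
      apply div_nonneg (by linarith) (le_of_lt hlm)
    have hst : Real.exp (-(t * (lam + mu))) = s := by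
      have he : -(t * (lam + mu)) = Real.log s := by
        rw [ht_def]; field_simp
      rw [he, Real.exp_log hs0]
    have hkey := h t ht
    rw [hst] at hkey
    -- Bernoulli lower bounds
    have hb1 : 1 + ((N - x : ℕ) : ℝ) * (a * s) ≤ (1 + a * s) ^ (N - x) :=
      one_add_mul_le_pow (by nlinarith) (N - x)
    have hb2 : 1 + (x : ℝ) * (-s) ≤ (1 + -s) ^ x :=
      one_add_mul_le_pow (by linarith) x
    rw [hncast] at hb1
    have hb2' : 1 - (x : ℝ) * s ≤ (1 - s) ^ x := by
      have he : (1 : ℝ) + -s = 1 - s := by ring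
      rw [he] at hb2; linarith
    have hpos1 : (0:ℝ) ≤ (1 + a * s) ^ (N - x) := by positivity
    have hL2 : (0:ℝ) ≤ 1 - (x:ℝ) * s := by linarith
    have hmul : (1 + n * (a * s)) * (1 - (x:ℝ) * s)
        ≤ (1 + a * s) ^ (N - x) * (1 - s) ^ x :=
      mul_le_mul hb1 hb2' hL2 hpos1
    have hexp : 1 < (1 + n * (a * s)) * (1 - (x:ℝ) * s) := by
      have hexpand : (1 + n * (a * s)) * (1 - (x:ℝ) * s) = 1 + s * (d - c * s) := by
        rw [hdd, hcc]; ring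
      rw [hexpand]
      nlinarith [mul_pos hs0 (sub_pos.mpr hcs)]
    linarith
  · intro hge t ht
    rw [div_le_iff₀ hlm] at hge
    set s : ℝ := Real.exp (-(t * (lam + mu))) with hs_def
    have hs0 : 0 < s := Real.exp_pos _
    have hs1 : s ≤ 1 := Real.exp_le_one_iff.mpr (by nlinarith)
    have h1 : 1 + a * s ≤ Real.exp (a * s) := by
      have := Real.add_one_le_exp (a * s); linarith
    have h2 : 1 - s ≤ Real.exp (-s) := by
      have := Real.add_one_le_exp (-s); linarith
    have hp1 : (1 + a * s) ^ (N - x) ≤ Real.exp (a * s) ^ (N - x) :=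
      pow_le_pow_left₀ (by nlinarith) h1 _
    have hp2 : (1 - s) ^ x ≤ Real.exp (-s) ^ x :=
      pow_le_pow_left₀ (by linarith) h2 _
    have hmul : (1 + a * s) ^ (N - x) * (1 - s) ^ x
        ≤ Real.exp (a * s) ^ (N - x) * Real.exp (-s) ^ x := by
      apply mul_le_mul hp1 hp2 (pow_nonneg (by linarith) x) (by positivity)
    have hE : Real.exp (a * s) ^ (N - x) * Real.exp (-s) ^ x
        = Real.exp (n * (a * s) + x * (-s)) := by
      rw [← Real.exp_nat_mul, ← Real.exp_nat_mul, ← Real.exp_add, hncast]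
    have hanx : a * n ≤ x := by
      have h1' : mu * (a * n) = lam * n := by rw [← hma]; ring
      have h2' : lam * n ≤ mu * x := by rw [hn_def]; nlinarith
      nlinarith
    have hle0 : n * (a * s) + (x:ℝ) * (-s) ≤ 0 := by
      nlinarith [mul_nonneg hs0.le (sub_nonneg.mpr hanx)]
    calc (1 + a * s) ^ (N - x) * (1 - s) ^ x
        ≤ Real.exp (n * (a * s) + x * (-s)) := by rw [← hE]; exact hmul
      _ ≤ 1 := Real.exp_le_one_iff.mpr hle0
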